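/- Assume d is odd and let A be a circular convolution operator on ℓ²(ℤ_d×ℤ_d) with kernel a possessing quadrantal symmetry in frequency response. Suppose i_1, i_2, j_1, j_2 ∈ ℤ_d satisfy gcd(|i_1−i_2|, d) = 1 and gcd(|j_1−j_2|, d) = 1, let Ω = {(i_1,j_1), (i_2,j_2), (i_1,j_2), (i_2,j_1)}, and let l_{(i,j)} = (d+1)²/4 − 1 for each (i,j) ∈ Ω. Then Y = {e_{(i,j)}, A e_{(i,j)}, …, A^{(d+1)²/4 − 1} e_{(i,j)} : (i,j) ∈ Ω} is a frame for ℓ²(ℤ_d×ℤ_d). -/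

import Mathlib

open Matrix

/-- Unnormalized 2D discrete Fourier transform of `a : ℤ_d × ℤ_d → ℂ`. -/
noncomputable def hatKer2 (d : ℕ) [NeZero d] (a : ZMod d × ZMod d → ℂ) :
    ZMod d × ZMod d → ℂ :=
  fun j => ∑ k : ZMod d × ZMod d,
    a k * Complex.exp (-(2 * (Real.pi : ℂ) * Complex.I) *
      ((j.1.val : ℂ) * (k.1.val : ℂ) + (j.2.val : ℂ) * (k.2.val : ℂ)) / (d : ℂ))

/-- The 2D circular convolution operator with kernel `a`, as a matrix. -/
def convMat2 (d : ℕ) (a : ZMod d × ZMod d → ℂ) :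
    Matrix (ZMod d × ZMod d) (ZMod d × ZMod d) ℂ :=
  Matrix.of fun k i => a (k - i)

/-- The Kronecker product `F_d ⊗ F_d`: its entry at `((i₁,i₂),(j₁,j₂))` is
`(1/d) ω_d^{i₁j₁ + i₂j₂}`. -/
noncomputable def F2Mat (d : ℕ) : Matrix (ZMod d × ZMod d) (ZMod d × ZMod d) ℂ :=
  Matrix.of fun i j => ((d : ℂ))⁻¹ * Complex.exp (-(2 * (Real.pi : ℂ) * Complex.I) *
    ((i.1.val : ℂ) * (j.1.val : ℂ) + (i.2.val : ℂ) * (j.2.val : ℂ)) / (d : ℂ))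

open Complex Finset


noncomputable def ee (d : ℕ) [NeZero d] (t : ZMod d) : ℂ :=
  Complex.exp (-(2 * (Real.pi : ℂ) * Complex.I) * (t.val : ℂ) / d)

variable (d : ℕ) [NeZero d]

lemma ee_nat (m : ℕ) :
    Complex.exp (-(2 * (Real.pi : ℂ) * Complex.I) * (m : ℂ) / d) = ee d (m : ZMod d) := by
  have hd : (d : ℂ) ≠ 0 := Nat.cast_ne_zero.2 (NeZero.ne d)
  obtain ⟨q, r, hr, hmqr⟩ : ∃ q r, r = m % d ∧ m = d * q + r :=
    ⟨m / d, m % d, rfl, (Nat.div_add_mod m d).symm⟩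
  subst hmqr
  have h1 : -(2 * (Real.pi : ℂ) * Complex.I) * ((d * q + r : ℕ) : ℂ) / d
      = ((-(q : ℤ) : ℤ) : ℂ) * (2 * (Real.pi : ℂ) * Complex.I)
        + -(2 * (Real.pi : ℂ) * Complex.I) * (r : ℂ) / d := by
    push_cast; field_simp; ring
  rw [h1, Complex.exp_add, Complex.exp_int_mul_two_pi_mul_I, one_mul]
  unfold ee
  rw [ZMod.val_natCast, ← hr]

lemma natCast_val_eq (t : ZMod d) : ((t.val : ℕ) : ZMod d) = t := by
  simp [ZMod.natCast_val, ZMod.cast_id]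

lemma ee_add (s t : ZMod d) : ee d (s + t) = ee d s * ee d t := by
  have h : s + t = ((s.val + t.val : ℕ) : ZMod d) := by
    rw [Nat.cast_add, natCast_val_eq, natCast_val_eq]
  rw [h, ← ee_nat]
  unfold ee
  rw [← Complex.exp_add]
  congr 1
  push_cast
  ring

lemma ee_zero : ee d 0 = 1 := by simp [ee]

lemma ee_ne_zero (t : ZMod d) : ee d t ≠ 0 := Complex.exp_ne_zero _

lemma ee_eq_one_iff (t : ZMod d) : ee d t = 1 ↔ t = 0 := by
  constructor
  · intro h
    rw [ee, Complex.exp_eq_one_iff] at h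
    obtain ⟨n, hn⟩ := h
    have hd : (d : ℂ) ≠ 0 := Nat.cast_ne_zero.2 (NeZero.ne d)
    have h2 : (2 * (Real.pi : ℂ) * Complex.I) ≠ 0 := by
      simpa using Complex.two_pi_I_ne_zero
    have h3 : ((-(t.val : ℂ)) / d) * (2 * (Real.pi : ℂ) * Complex.I)
        = (n : ℂ) * (2 * (Real.pi : ℂ) * Complex.I) := by rw [← hn]; ring
    have h4 := mul_right_cancel₀ h2 h3
    rw [div_eq_iff hd] at h4
    have h6 : ((t.val : ℤ) : ℂ) = ((-n * d : ℤ) : ℂ) := by push_cast; linear_combination -h4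
    have h6' : (t.val : ℤ) = -n * d := by exact_mod_cast h6
    have h7 : (t.val : ℤ) < d := by exact_mod_cast ZMod.val_lt t
    have h8 : (0 : ℤ) ≤ t.val := Int.ofNat_nonneg _
    have hd0 : (0:ℤ) < d := by exact_mod_cast Nat.pos_of_ne_zero (NeZero.ne d)
    have hn0 : n = 0 := by nlinarith
    have : t.val = 0 := by rw [hn0, neg_zero, zero_mul] at h6'; exact_mod_cast h6'
    exact (ZMod.val_eq_zero t).mp this
  · rintro rfl; exact ee_zero d

lemma ee_nsmul (n : ℕ) (u : ZMod d) : ee d (n • u) = ee d u ^ n := by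
  induction n with
  | zero => simp [ee_zero]
  | succ k ih => rw [succ_nsmul, ee_add, ih, pow_succ]

lemma ee_mul_eq_pow (t u : ZMod d) : ee d (t * u) = ee d u ^ t.val := by
  rw [← ee_nsmul]
  congr 1
  rw [nsmul_eq_mul, natCast_val_eq]

lemma sum_ee (u : ZMod d) :
    ∑ t : ZMod d, ee d (t * u) = if u = 0 then (d : ℂ) else 0 := by
  have hsum : ∑ t : ZMod d, ee d (t * u) = ∑ n ∈ Finset.range d, ee d u ^ n := by
    refine Finset.sum_nbij' (fun (t : ZMod d) => t.val) (fun (n : ℕ) => (n : ZMod d))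
      ?_ ?_ ?_ ?_ ?_
    · intro t _; exact Finset.mem_range.2 (ZMod.val_lt t)
    · intro n _; exact Finset.mem_univ _
    · intro t _; exact natCast_val_eq d t
    · intro n hn
      show ((n : ZMod d)).val = n
      rw [ZMod.val_natCast]; exact Nat.mod_eq_of_lt (Finset.mem_range.1 hn)
    · intro t _; rw [ee_mul_eq_pow]
  rw [hsum]
  by_cases hu : u = 0
  · simp [hu, ee_zero]
  · have h1 : ee d u ≠ 1 := fun h => hu ((ee_eq_one_iff d u).mp h)
    have h2 : ee d u ^ d = 1 := by
      rw [← ee_nsmul]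
      have : (d : ℕ) • u = 0 := by
        rw [nsmul_eq_mul, ZMod.natCast_self, zero_mul]
      rw [this, ee_zero]
    rw [if_neg hu, geom_sum_eq h1, h2, sub_self, zero_div]

noncomputable def chi (k : ZMod d × ZMod d) : ZMod d × ZMod d → ℂ :=
  fun x => ee d (-(k.1 * x.1 + k.2 * x.2))

lemma exp_prod_eq (s t : ZMod d) :
    Complex.exp (-(2 * (Real.pi : ℂ) * Complex.I) * ((s.val : ℂ) * (t.val : ℂ)) / d)
      = ee d (s * t) := by
  have h : ((s.val : ℂ) * (t.val : ℂ)) = ((s.val * t.val : ℕ) : ℂ) := by push_cast; ring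
  rw [h, ee_nat]
  congr 1
  rw [Nat.cast_mul, natCast_val_eq, natCast_val_eq]

lemma hat_eq (a : ZMod d × ZMod d → ℂ) (k : ZMod d × ZMod d) :
    hatKer2 d a k = ∑ j : ZMod d × ZMod d, a j * ee d (k.1 * j.1 + k.2 * j.2) := by
  unfold hatKer2
  refine Finset.sum_congr rfl fun j _ => ?_
  congr 1
  have h : -(2 * (Real.pi : ℂ) * Complex.I) *
        ((k.1.val : ℂ) * (j.1.val : ℂ) + (k.2.val : ℂ) * (j.2.val : ℂ)) / d
      = -(2 * (Real.pi : ℂ) * Complex.I) * ((k.1.val : ℂ) * (j.1.val : ℂ)) / d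
        + -(2 * (Real.pi : ℂ) * Complex.I) * ((k.2.val : ℂ) * (j.2.val : ℂ)) / d := by
    ring
  rw [h, Complex.exp_add, exp_prod_eq, exp_prod_eq, ← ee_add]

lemma mulVec_chi (a : ZMod d × ZMod d → ℂ) (k : ZMod d × ZMod d) :
    convMat2 d a *ᵥ chi d k = hatKer2 d a k • chi d k := by
  funext x
  have lhs : (convMat2 d a *ᵥ chi d k) x = ∑ i : ZMod d × ZMod d, a (x - i) * chi d k i := by
    simp [Matrix.mulVec, dotProduct, convMat2]
  rw [lhs, ← Equiv.sum_comp (Equiv.subLeft x) (fun i => a (x - i) * chi d k i)]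
  have step : ∀ j : ZMod d × ZMod d,
      a (x - (Equiv.subLeft x j)) * chi d k (Equiv.subLeft x j)
        = a j * ee d (k.1 * j.1 + k.2 * j.2) * chi d k x := by
    intro j
    have h1 : x - Equiv.subLeft x j = j := by simp [Equiv.subLeft]
    have h2 : chi d k (x - j) = ee d (k.1 * j.1 + k.2 * j.2) * chi d k x := by
      unfold chi
      rw [← ee_add]
      congr 1
      obtain ⟨x1, x2⟩ := x; obtain ⟨j1, j2⟩ := j; obtain ⟨k1, k2⟩ := k
      simp only [Prod.mk_sub_mk]
      ring
    have h3 : (Equiv.subLeft x j) = x - j := by simp [Equiv.subLeft]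
    rw [h1, h3, h2]; ring
  rw [Finset.sum_congr rfl fun j _ => step j]
  rw [Pi.smul_apply, smul_eq_mul, hat_eq, Finset.sum_mul]

lemma mulVec_pow_chi (a : ZMod d × ZMod d → ℂ) (k : ZMod d × ZMod d) (n : ℕ) :
    (convMat2 d a) ^ n *ᵥ chi d k = (hatKer2 d a k) ^ n • chi d k := by
  induction n with
  | zero => simp
  | succ m ih =>
    rw [pow_succ', ← Matrix.mulVec_mulVec, ih, Matrix.mulVec_smul, mulVec_chi,
      smul_smul, pow_succ', mul_comm]

lemma single_eq (q : ZMod d × ZMod d) :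
    (Pi.single q 1 : ZMod d × ZMod d → ℂ)
      = ∑ k : ZMod d × ZMod d,
          (((d : ℂ) ^ 2)⁻¹ * ee d (k.1 * q.1 + k.2 * q.2)) • chi d k := by
  have hd : (d : ℂ) ≠ 0 := Nat.cast_ne_zero.2 (NeZero.ne d)
  funext x
  rw [Finset.sum_apply]
  have term : ∀ k : ZMod d × ZMod d,
      ((((d : ℂ) ^ 2)⁻¹ * ee d (k.1 * q.1 + k.2 * q.2)) • chi d k) x
        = ((d : ℂ) ^ 2)⁻¹ * (ee d (k.1 * (q.1 - x.1)) * ee d (k.2 * (q.2 - x.2))) := by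
    intro k
    rw [Pi.smul_apply, smul_eq_mul]
    unfold chi
    rw [← ee_add, mul_assoc, ← ee_add]
    congr 2
    ring
  rw [Finset.sum_congr rfl fun k _ => term k, ← Finset.mul_sum]
  rw [Fintype.sum_prod_type]
  simp only []
  rw [← Finset.sum_mul_sum]
  rw [sum_ee, sum_ee]
  rw [Pi.single_apply]
  by_cases hx : x = q
  · subst hx
    rw [if_pos rfl, if_pos (by ring), if_pos (by ring)]
    field_simp
  · rw [if_neg hx]
    have : ¬(q.1 - x.1 = 0) ∨ ¬(q.2 - x.2 = 0) := by
      by_contra hcon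
      push_neg at hcon
      obtain ⟨h1, h2⟩ := hcon
      apply hx
      have e1 : x.1 = q.1 := by rw [← sub_eq_zero]; rw [← neg_sub]; simp [h1]
      have e2 : x.2 = q.2 := by rw [← sub_eq_zero]; rw [← neg_sub]; simp [h2]
      exact Prod.ext e1 e2
    rcases this with h | h
    · rw [if_neg h]; ring
    · rw [if_neg h]; ring

lemma key1 (hodd : Odd d) (s i₁ i₂ : ZMod d) (hi : Nat.gcd (i₁ - i₂).val d = 1) :
    ∃ α₁ α₂ : ℂ, ∀ σ ∈ ({s, -s} : Finset (ZMod d)),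
      α₁ * ee d (σ * i₁) + α₂ * ee d (σ * i₂) = if σ = s then 1 else 0 := by
  have hunit : IsUnit (i₁ - i₂) := by
    rw [← natCast_val_eq d (i₁ - i₂)]
    exact (ZMod.isUnit_iff_coprime _ d).mpr hi
  have h2unit : IsUnit (2 : ZMod d) := by
    have : ((2 : ℕ) : ZMod d) = (2 : ZMod d) := by push_cast; ring
    rw [← this]
    refine (ZMod.isUnit_iff_coprime 2 d).mpr ?_
    exact Nat.coprime_two_left.mpr hodd
  by_cases hs : -s = s
  · refine ⟨(ee d (s * i₁))⁻¹, 0, ?_⟩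
    intro σ hσ
    have : σ = s := by
      rcases Finset.mem_insert.1 hσ with h | h
      · exact h
      · rw [Finset.mem_singleton.1 h, hs]
    subst this
    rw [if_pos rfl, zero_mul, add_zero, inv_mul_cancel₀ (ee_ne_zero d _)]
  · -- generic case
    set a1 := ee d (s * i₁)
    set a2 := ee d (s * i₂)
    set b1 := ee d (-s * i₁)
    set b2 := ee d (-s * i₂)
    have hdet : a1 * b2 - b1 * a2 ≠ 0 := by
      intro hD
      have h1 : a1 * b2 = ee d (s * (i₁ - i₂)) := by
        rw [← ee_add]; congr 1; ring
      have h2 : b1 * a2 = ee d (-(s * (i₁ - i₂))) := by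
        rw [← ee_add]; congr 1; ring
      have heq : ee d (s * (i₁ - i₂)) = ee d (-(s * (i₁ - i₂))) := by
        rw [← h1, ← h2]; exact sub_eq_zero.mp hD
      have hone : ee d (s * (i₁ - i₂) + s * (i₁ - i₂)) = 1 := by
        rw [ee_add]
        nth_rewrite 2 [heq]
        rw [← ee_add, add_neg_cancel, ee_zero]
      have hzero : s * (i₁ - i₂) + s * (i₁ - i₂) = 0 := (ee_eq_one_iff d _).mp hone
      have h2x : (2 : ZMod d) * (s * (i₁ - i₂)) = 0 := by rw [two_mul]; exact hzero
      have hx : s * (i₁ - i₂) = 0 := (IsUnit.mul_right_eq_zero h2unit).mp h2x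
      have hs0 : s = 0 := (IsUnit.mul_left_eq_zero hunit).mp hx
      exact hs (by rw [hs0, neg_zero])
    refine ⟨b2 / (a1 * b2 - b1 * a2), -b1 / (a1 * b2 - b1 * a2), ?_⟩
    intro σ hσ
    rcases Finset.mem_insert.1 hσ with h | h
    · subst h
      rw [if_pos rfl]
      show b2 / (a1 * b2 - b1 * a2) * a1 + -b1 / (a1 * b2 - b1 * a2) * a2 = 1
      rw [div_mul_eq_mul_div, div_mul_eq_mul_div, ← add_div, div_eq_one_iff_eq hdet]
      ring
    · rw [Finset.mem_singleton.1 h, if_neg hs]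
      show b2 / _ * b1 + -b1 / _ * b2 = 0
      field_simp
      ring

/-- assume `d` odd and the kernel `a` possesses quadrantal symmetry in
frequency response, i.e. the level sets of `â` are exactly the orbits
`{(s,p),(s,-p),(-s,p),(-s,-p)}`. If `gcd(|i₁-i₂|,d) = 1` and `gcd(|j₁-j₂|,d) = 1`,
`Ω = {(i₁,j₁),(i₂,j₂),(i₁,j₂),(i₂,j₁)}` and `l_{(i,j)} = (d+1)²/4 - 1`, then
`Y = {A^n e_{(i,j)} : (i,j) ∈ Ω, n ≤ (d+1)²/4 - 1}` is a frame. -/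
theorem stmt17 (d : ℕ) [NeZero d] (hodd : Odd d) (a : ZMod d × ZMod d → ℂ)
    (hsym : ∀ x y : ZMod d × ZMod d, hatKer2 d a x = hatKer2 d a y ↔
      ((y.1 = x.1 ∨ y.1 = -x.1) ∧ (y.2 = x.2 ∨ y.2 = -x.2)))
    (i₁ i₂ j₁ j₂ : ZMod d)
    (hi : Nat.gcd (i₁ - i₂).val d = 1) (hj : Nat.gcd (j₁ - j₂).val d = 1) :
    Submodule.span ℂ {v : ZMod d × ZMod d → ℂ | ∃ q : ZMod d × ZMod d,
        (q = (i₁, j₁) ∨ q = (i₂, j₂) ∨ q = (i₁, j₂) ∨ q = (i₂, j₁)) ∧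
        ∃ n ≤ (d + 1) ^ 2 / 4 - 1,
        v = (convMat2 d a) ^ n *ᵥ (Pi.single q 1 : ZMod d × ZMod d → ℂ)} = ⊤ := by
  classical
  obtain ⟨m, hdm⟩ := hodd
  have hodd' : Odd d := ⟨m, hdm⟩
  have hd : (d : ℂ) ≠ 0 := Nat.cast_ne_zero.2 (NeZero.ne d)
  have hN : (d + 1) ^ 2 / 4 = (m + 1) ^ 2 := by
    have h4 : (d + 1) ^ 2 = 4 * (m + 1) ^ 2 := by rw [hdm]; ring
    rw [h4]; exact Nat.mul_div_cancel_left _ (by norm_num)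
  set W := Submodule.span ℂ {v : ZMod d × ZMod d → ℂ | ∃ q : ZMod d × ZMod d,
        (q = (i₁, j₁) ∨ q = (i₂, j₂) ∨ q = (i₁, j₂) ∨ q = (i₂, j₁)) ∧
        ∃ n ≤ (d + 1) ^ 2 / 4 - 1,
        v = (convMat2 d a) ^ n *ᵥ (Pi.single q 1 : ZMod d × ZMod d → ℂ)} with hWdef
  -- eigenvalue count
  set T : Finset ℂ := Finset.image (hatKer2 d a) Finset.univ with hT
  have hval_le : ∀ s : ZMod d, ∃ s' : ZMod d, (s' = s ∨ s' = -s) ∧ s'.val ≤ m := by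
    intro s
    by_cases h : s.val ≤ m
    · exact ⟨s, Or.inl rfl, h⟩
    · refine ⟨-s, Or.inr rfl, ?_⟩
      have hs0 : s ≠ 0 := by
        intro h0; apply h; rw [h0, ZMod.val_zero]; omega
      rw [ZMod.neg_val, if_neg hs0]
      have h2 := ZMod.val_lt s
      omega
  have hcardT : T.card ≤ (m + 1) ^ 2 := by
    set R : Finset (ZMod d × ZMod d) :=
      (Finset.univ.filter fun s : ZMod d => s.val ≤ m) ×ˢ
        (Finset.univ.filter fun s : ZMod d => s.val ≤ m) with hR
    have hsub : T ⊆ Finset.image (hatKer2 d a) R := by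
      intro z hz
      obtain ⟨k, -, rfl⟩ := Finset.mem_image.1 hz
      obtain ⟨s', hs', hs'le⟩ := hval_le k.1
      obtain ⟨p', hp', hp'le⟩ := hval_le k.2
      refine Finset.mem_image.2 ⟨(s', p'), ?_, ?_⟩
      · exact Finset.mem_product.2 ⟨Finset.mem_filter.2 ⟨Finset.mem_univ _, hs'le⟩,
          Finset.mem_filter.2 ⟨Finset.mem_univ _, hp'le⟩⟩
      · exact ((hsym k (s', p')).mpr ⟨hs', hp'⟩).symm
    have hfilt : (Finset.univ.filter fun s : ZMod d => s.val ≤ m).card ≤ m + 1 := by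
      have h1 : (Finset.univ.filter fun s : ZMod d => s.val ≤ m).card
          = ((Finset.univ.filter fun s : ZMod d => s.val ≤ m).image ZMod.val).card :=
        (Finset.card_image_of_injective _ (ZMod.val_injective d)).symm
      rw [h1]
      have h2 : (Finset.univ.filter fun s : ZMod d => s.val ≤ m).image ZMod.val
          ⊆ Finset.range (m + 1) := by
        intro n hn
        obtain ⟨s, hs, rfl⟩ := Finset.mem_image.1 hn
        exact Finset.mem_range.2 (Nat.lt_succ_of_le (Finset.mem_filter.1 hs).2)
      calc _ ≤ (Finset.range (m + 1)).card := Finset.card_le_card h2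
        _ = m + 1 := Finset.card_range _
    calc T.card ≤ (Finset.image (hatKer2 d a) R).card := Finset.card_le_card hsub
      _ ≤ R.card := Finset.card_image_le
      _ = _ * _ := Finset.card_product _ _
      _ ≤ (m + 1) * (m + 1) := Nat.mul_le_mul hfilt hfilt
      _ = (m + 1) ^ 2 := (sq (m + 1)).symm
  -- main: each character is in W
  have hchi : ∀ k₀ : ZMod d × ZMod d, chi d k₀ ∈ W := by
    intro k₀
    set lam := hatKer2 d a k₀ with hlam
    have hlamT : lam ∈ T := Finset.mem_image.2 ⟨k₀, Finset.mem_univ _, rfl⟩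
    set P : Polynomial ℂ := ∏ μ ∈ T.erase lam, (Polynomial.X - Polynomial.C μ) with hP
    have hPdeg : P.natDegree < (m + 1) ^ 2 := by
      have h1 : P.natDegree = (T.erase lam).card := by
        rw [hP, Polynomial.natDegree_prod _ _ fun μ _ => Polynomial.X_sub_C_ne_zero μ]
        simp [Polynomial.natDegree_X_sub_C]
      rw [h1, Finset.card_erase_of_mem hlamT]
      have h2 : 0 < T.card := Finset.card_pos.2 ⟨lam, hlamT⟩
      omega
    have hPeval0 : ∀ k : ZMod d × ZMod d, hatKer2 d a k ≠ lam →
        P.eval (hatKer2 d a k) = 0 := by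
      intro k hk
      rw [hP, Polynomial.eval_prod]
      refine Finset.prod_eq_zero (i := hatKer2 d a k)
        (Finset.mem_erase.2 ⟨hk, Finset.mem_image.2 ⟨k, Finset.mem_univ _, rfl⟩⟩) ?_
      simp
    set η := P.eval lam with hη
    have hηne : η ≠ 0 := by
      rw [hη, hP, Polynomial.eval_prod]
      refine Finset.prod_ne_zero_iff.2 fun μ hμ => ?_
      simp only [Polynomial.eval_sub, Polynomial.eval_X, Polynomial.eval_C]
      exact sub_ne_zero.2 (Ne.symm (Finset.mem_erase.1 hμ).1)
    have hu : ∀ q : ZMod d × ZMod d,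
        (q = (i₁, j₁) ∨ q = (i₂, j₂) ∨ q = (i₁, j₂) ∨ q = (i₂, j₁)) →
        (∑ k ∈ Finset.univ.filter (fun k => hatKer2 d a k = lam),
          ee d (k.1 * q.1 + k.2 * q.2) • chi d k) ∈ W := by
      intro q hq
      have h1 : ∀ n : ℕ, (convMat2 d a ^ n *ᵥ (Pi.single q 1 : ZMod d × ZMod d → ℂ))
          = ∑ k : ZMod d × ZMod d,
            ((((d : ℂ) ^ 2)⁻¹ * ee d (k.1 * q.1 + k.2 * q.2)) * (hatKer2 d a k) ^ n)
              • chi d k := by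
        intro n
        rw [single_eq d q]
        have hlin : (convMat2 d a ^ n *ᵥ
              ∑ k : ZMod d × ZMod d, (((d : ℂ) ^ 2)⁻¹ * ee d (k.1 * q.1 + k.2 * q.2)) • chi d k)
            = ∑ k : ZMod d × ZMod d, (((d : ℂ) ^ 2)⁻¹ * ee d (k.1 * q.1 + k.2 * q.2))
                • (convMat2 d a ^ n *ᵥ chi d k) := by
          rw [← Matrix.mulVecLin_apply, map_sum]
          exact Finset.sum_congr rfl fun k _ => by rw [LinearMap.map_smul, Matrix.mulVecLin_apply]
        rw [hlin]
        exact Finset.sum_congr rfl fun k _ => by rw [mulVec_pow_chi, smul_smul]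
      have hstep : ∑ n ∈ Finset.range ((m + 1) ^ 2),
            P.coeff n • (convMat2 d a ^ n *ᵥ (Pi.single q 1 : ZMod d × ZMod d → ℂ))
          = ∑ k : ZMod d × ZMod d,
              ((((d : ℂ) ^ 2)⁻¹ * ee d (k.1 * q.1 + k.2 * q.2)) * P.eval (hatKer2 d a k))
                • chi d k := by
        calc ∑ n ∈ Finset.range ((m + 1) ^ 2),
              P.coeff n • (convMat2 d a ^ n *ᵥ (Pi.single q 1 : ZMod d × ZMod d → ℂ))
            = ∑ n ∈ Finset.range ((m + 1) ^ 2), ∑ k : ZMod d × ZMod d,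
                (P.coeff n * ((((d : ℂ) ^ 2)⁻¹ * ee d (k.1 * q.1 + k.2 * q.2))
                  * (hatKer2 d a k) ^ n)) • chi d k := by
              refine Finset.sum_congr rfl fun n _ => ?_
              rw [h1 n, Finset.smul_sum]
              exact Finset.sum_congr rfl fun k _ => by rw [smul_smul]
          _ = ∑ k : ZMod d × ZMod d, ∑ n ∈ Finset.range ((m + 1) ^ 2),
                (P.coeff n * ((((d : ℂ) ^ 2)⁻¹ * ee d (k.1 * q.1 + k.2 * q.2))
                  * (hatKer2 d a k) ^ n)) • chi d k := Finset.sum_comm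
          _ = _ := by
              refine Finset.sum_congr rfl fun k _ => ?_
              rw [← Finset.sum_smul]
              congr 1
              rw [Polynomial.eval_eq_sum_range' hPdeg, Finset.mul_sum]
              exact Finset.sum_congr rfl fun n _ => by ring
      have hWsum : (∑ k : ZMod d × ZMod d,
          ((((d : ℂ) ^ 2)⁻¹ * ee d (k.1 * q.1 + k.2 * q.2)) * P.eval (hatKer2 d a k))
            • chi d k) ∈ W := by
        rw [← hstep]
        refine Submodule.sum_mem _ fun n hn => Submodule.smul_mem _ _ ?_
        refine Submodule.subset_span ⟨q, hq, n, ?_, rfl⟩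
        have h3 := Finset.mem_range.1 hn
        omega
      have hsplit : (∑ k : ZMod d × ZMod d,
            ((((d : ℂ) ^ 2)⁻¹ * ee d (k.1 * q.1 + k.2 * q.2)) * P.eval (hatKer2 d a k))
              • chi d k)
          = (((d : ℂ) ^ 2)⁻¹ * η) • ∑ k ∈ Finset.univ.filter (fun k => hatKer2 d a k = lam),
              ee d (k.1 * q.1 + k.2 * q.2) • chi d k := by
        rw [Finset.smul_sum]
        calc (∑ k : ZMod d × ZMod d,
              ((((d : ℂ) ^ 2)⁻¹ * ee d (k.1 * q.1 + k.2 * q.2)) * P.eval (hatKer2 d a k))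
                • chi d k)
            = ∑ k : ZMod d × ZMod d, (if hatKer2 d a k = lam then
                ((((d : ℂ) ^ 2)⁻¹ * η) • (ee d (k.1 * q.1 + k.2 * q.2) • chi d k))
                else 0) := by
              refine Finset.sum_congr rfl fun k _ => ?_
              by_cases hk : hatKer2 d a k = lam
              · rw [if_pos hk, hk, ← hη, smul_smul]
                congr 1
                ring
              · rw [if_neg hk, hPeval0 k hk, mul_zero, zero_smul]
          _ = _ := by
              rw [← Finset.sum_filter]
    -- the orbit finset
      have h6 := hsplit ▸ hWsum
      have hcη : (((d : ℂ) ^ 2)⁻¹ * η) ≠ 0 :=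
        mul_ne_zero (inv_ne_zero (pow_ne_zero 2 hd)) hηne
      have h7 := Submodule.smul_mem W ((((d : ℂ) ^ 2)⁻¹ * η))⁻¹ h6
      rwa [smul_smul, inv_mul_cancel₀ hcη, one_smul] at h7
    have hO : Finset.univ.filter (fun k : ZMod d × ZMod d => hatKer2 d a k = lam)
        = ({k₀.1, -k₀.1} : Finset (ZMod d)) ×ˢ ({k₀.2, -k₀.2} : Finset (ZMod d)) := by
      ext k
      simp only [Finset.mem_filter, Finset.mem_univ, true_and, Finset.mem_product,
        Finset.mem_insert, Finset.mem_singleton]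
      constructor
      · intro h; exact (hsym k₀ k).mp h.symm
      · intro h; exact ((hsym k₀ k).mpr h).symm
    obtain ⟨α₁, α₂, hα⟩ := key1 d hodd' k₀.1 i₁ i₂ hi
    obtain ⟨β₁, β₂, hβ⟩ := key1 d hodd' k₀.2 j₁ j₂ hj
    set Of : Finset (ZMod d × ZMod d) :=
      ({k₀.1, -k₀.1} : Finset (ZMod d)) ×ˢ ({k₀.2, -k₀.2} : Finset (ZMod d)) with hOf
    set u : ZMod d × ZMod d → (ZMod d × ZMod d → ℂ) :=
      fun q => ∑ k ∈ Of, ee d (k.1 * q.1 + k.2 * q.2) • chi d k with hu_def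
    have expand : ∀ (γ : ℂ) (q : ZMod d × ZMod d),
        γ • u q = ∑ k ∈ Of, (γ * ee d (k.1 * q.1) * ee d (k.2 * q.2)) • chi d k := by
      intro γ q
      rw [hu_def, Finset.smul_sum]
      refine Finset.sum_congr rfl fun k _ => ?_
      rw [smul_smul, ee_add, mul_assoc]
    have hk0mem : k₀ ∈ Of := Finset.mem_product.2
      ⟨Finset.mem_insert_self _ _, Finset.mem_insert_self _ _⟩
    have hcomb : chi d k₀ = (α₁ * β₁) • u (i₁, j₁) + (α₁ * β₂) • u (i₁, j₂)
        + (α₂ * β₁) • u (i₂, j₁) + (α₂ * β₂) • u (i₂, j₂) := by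
      rw [expand, expand, expand, expand, ← Finset.sum_add_distrib,
        ← Finset.sum_add_distrib, ← Finset.sum_add_distrib]
      have hterm : ∀ k ∈ Of,
          ((α₁ * β₁ * ee d (k.1 * (i₁, j₁).1) * ee d (k.2 * (i₁, j₁).2)) • chi d k
            + (α₁ * β₂ * ee d (k.1 * (i₁, j₂).1) * ee d (k.2 * (i₁, j₂).2)) • chi d k
            + (α₂ * β₁ * ee d (k.1 * (i₂, j₁).1) * ee d (k.2 * (i₂, j₁).2)) • chi d k
            + (α₂ * β₂ * ee d (k.1 * (i₂, j₂).1) * ee d (k.2 * (i₂, j₂).2)) • chi d k)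
          = (if k = k₀ then chi d k else 0) := by
        intro k hk
        obtain ⟨hk1, hk2⟩ := Finset.mem_product.1 hk
        have hαk := hα k.1 hk1
        have hβk := hβ k.2 hk2
        have hcoef : α₁ * β₁ * ee d (k.1 * (i₁, j₁).1) * ee d (k.2 * (i₁, j₁).2)
            + α₁ * β₂ * ee d (k.1 * (i₁, j₂).1) * ee d (k.2 * (i₁, j₂).2)
            + α₂ * β₁ * ee d (k.1 * (i₂, j₁).1) * ee d (k.2 * (i₂, j₁).2)
            + α₂ * β₂ * ee d (k.1 * (i₂, j₂).1) * ee d (k.2 * (i₂, j₂).2)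
            = (α₁ * ee d (k.1 * i₁) + α₂ * ee d (k.1 * i₂))
              * (β₁ * ee d (k.2 * j₁) + β₂ * ee d (k.2 * j₂)) := by
          show α₁ * β₁ * ee d (k.1 * i₁) * ee d (k.2 * j₁)
              + α₁ * β₂ * ee d (k.1 * i₁) * ee d (k.2 * j₂)
              + α₂ * β₁ * ee d (k.1 * i₂) * ee d (k.2 * j₁)
              + α₂ * β₂ * ee d (k.1 * i₂) * ee d (k.2 * j₂) = _
          ring
        rw [← add_smul, ← add_smul, ← add_smul, hcoef, hαk, hβk]
        by_cases hkk : k = k₀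
        · have e1 : k.1 = k₀.1 := by rw [hkk]
          have e2 : k.2 = k₀.2 := by rw [hkk]
          rw [if_pos e1, if_pos e2, if_pos hkk, one_mul, one_smul]
        · have : ¬(k.1 = k₀.1) ∨ ¬(k.2 = k₀.2) := by
            by_contra hc; push_neg at hc
            exact hkk (Prod.ext hc.1 hc.2)
          rcases this with h | h
          · rw [if_neg h, zero_mul, zero_smul, if_neg hkk]
          · rw [if_neg h, mul_zero, zero_smul, if_neg hkk]
      rw [Finset.sum_congr rfl hterm, Finset.sum_ite_eq' Of k₀ (chi d), if_pos hk0mem]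
    have h11 := hu (i₁, j₁) (Or.inl rfl)
    have h12 := hu (i₁, j₂) (Or.inr (Or.inr (Or.inl rfl)))
    have h21 := hu (i₂, j₁) (Or.inr (Or.inr (Or.inr rfl)))
    have h22 := hu (i₂, j₂) (Or.inr (Or.inl rfl))
    rw [hO] at h11 h12 h21 h22
    rw [hcomb]
    exact add_mem (add_mem (add_mem (Submodule.smul_mem _ _ h11)
      (Submodule.smul_mem _ _ h12)) (Submodule.smul_mem _ _ h21))
      (Submodule.smul_mem _ _ h22)
  -- conclude
  rw [eq_top_iff]
  rintro v -
  have hv : v = ∑ q : ZMod d × ZMod d, v q • (Pi.single q 1 : ZMod d × ZMod d → ℂ) := by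
    funext x
    rw [Finset.sum_apply]
    simp [Pi.single_apply]
  rw [hv]
  refine Submodule.sum_mem _ fun q _ => Submodule.smul_mem _ _ ?_
  rw [single_eq d q]
  exact Submodule.sum_mem _ fun k _ => Submodule.smul_mem _ _ (hchi k)
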